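/- arXiv:2603.02157 — 3 statements merged into one kernel-verified Lean document; each statement's English description precedes it below -/
import Mathlib

section
/- Distance of product complexes (special case): Let C be a bounded chain complex and D a two-term chain complex D_1 → D_0 over F2. Then the k-systolic distance of the tensor product complex satisfies d_k(C⊗D) = min(d_{k-1}(C)·d_1(D), d_k(C)·d_0(D)), where d_j denotes the minimum Hamming weight of a nonzero homology class representative minimized over classes, with the convention d_j = ∞ if H_j = 0. -/
open Matrix Kronecker

/-- The `k`-systolic distance of a based `𝔽₂`-chain complex at the middle term of
`· --B--> · --A--> ·` : the minimum Hamming weight of a representative of a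
nontrivial homology class (a vector in `ker A` not in `im B`), with the
convention `∞` when the homology vanishes. -/
noncomputable def sysDist {ι κ τ : Type} [Fintype ι] [Fintype κ] [Fintype τ]
    (A : Matrix κ ι (ZMod 2)) (B : Matrix ι τ (ZMod 2)) : ℕ∞ :=
  sInf {w : ℕ∞ | ∃ x : ι → ZMod 2,
    A.mulVecLin x = 0 ∧ x ∉ LinearMap.range B.mulVecLin ∧ w = hammingNorm x}

lemma zmod2_ne_zero {a : ZMod 2} (h : a ≠ 0) : a = 1 := by revert a; decide
lemma zmod2_rearrange {a b c : ZMod 2} (h : a + b = c) : b = c + a := by revert h; revert a b c; decide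

lemma mulVec_mul_const {α γ : Type} [Fintype α] [Fintype γ] (M : Matrix γ α (ZMod 2))
    (xx : α → ZMod 2) (c : ZMod 2) (i : γ) :
    (M *ᵥ fun a => xx a * c) i = (M *ᵥ xx) i * c := by
  simp only [mulVec, dotProduct, Finset.sum_mul]
  exact Finset.sum_congr rfl fun a _ => by ring

lemma mulVec_const_mul {α γ : Type} [Fintype α] [Fintype γ] (M : Matrix γ α (ZMod 2))
    (xx : α → ZMod 2) (c : ZMod 2) (i : γ) :
    (M *ᵥ fun a => c * xx a) i = c * (M *ᵥ xx) i := by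
  simp only [mulVec, dotProduct, Finset.mul_sum]
  exact Finset.sum_congr rfl fun a _ => by ring



section Aux

variable {ι κ τ : Type} [Fintype ι] [Fintype κ] [Fintype τ]

lemma sysDist_le (A : Matrix κ ι (ZMod 2)) (B : Matrix ι τ (ZMod 2)) {x : ι → ZMod 2}
    (h1 : A.mulVecLin x = 0) (h2 : x ∉ LinearMap.range B.mulVecLin) :
    sysDist A B ≤ (hammingNorm x : ℕ∞) :=
  sInf_le ⟨x, h1, h2, rfl⟩

lemma one_le_sysDist (A : Matrix κ ι (ZMod 2)) (B : Matrix ι τ (ZMod 2)) :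
    1 ≤ sysDist A B := by
  refine le_sInf ?_
  rintro w ⟨x, -, h2, rfl⟩
  have hx : x ≠ 0 := by rintro rfl; exact h2 (Submodule.zero_mem _)
  have : 1 ≤ hammingNorm x := Nat.one_le_iff_ne_zero.2 (hammingNorm_ne_zero_iff.2 hx)
  exact_mod_cast this

lemma sysDist_ne_zero (A : Matrix κ ι (ZMod 2)) (B : Matrix ι τ (ZMod 2)) :
    sysDist A B ≠ 0 := by
  intro h
  have := one_le_sysDist A B
  rw [h] at this
  exact (by norm_num : ¬ ((1:ℕ∞) ≤ 0)) this

lemma sysDist_spec (A : Matrix κ ι (ZMod 2)) (B : Matrix ι τ (ZMod 2))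
    (h : sysDist A B ≠ ⊤) :
    ∃ x : ι → ZMod 2, A.mulVecLin x = 0 ∧ x ∉ LinearMap.range B.mulVecLin ∧
      sysDist A B = (hammingNorm x : ℕ∞) := by
  set S : Set ℕ∞ := {w : ℕ∞ | ∃ x : ι → ZMod 2,
    A.mulVecLin x = 0 ∧ x ∉ LinearMap.range B.mulVecLin ∧ w = hammingNorm x} with hS
  have hne : S.Nonempty := by
    by_contra hemp
    rw [Set.not_nonempty_iff_eq_empty] at hemp
    apply h
    rw [sysDist, ← hS, hemp, sInf_empty]
  set S' : Set ℕ := {n : ℕ | (n : ℕ∞) ∈ S} with hS'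
  have hne' : S'.Nonempty := by
    obtain ⟨w, hw⟩ := hne
    obtain ⟨x, h1, h2, rfl⟩ := hw
    exact ⟨hammingNorm x, ⟨x, h1, h2, rfl⟩⟩
  set n := sInf S' with hn
  have hmem : ((n : ℕ) : ℕ∞) ∈ S := Nat.sInf_mem hne'
  have heq : sysDist A B = ((n : ℕ) : ℕ∞) := by
    apply le_antisymm (sInf_le hmem)
    refine le_sInf ?_
    rintro w ⟨x, h1, h2, rfl⟩
    have hx' : hammingNorm x ∈ S' := ⟨x, h1, h2, rfl⟩
    exact_mod_cast Nat.sInf_le hx'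
  obtain ⟨x, h1, h2, hx⟩ := hmem
  exact ⟨x, h1, h2, by rw [heq, hx]⟩

end Aux

lemma zmod2_add_eq_zero {a b : ZMod 2} (h : a + b = 0) : a = b := by revert a b; decide
lemma zmod2_add_self (a : ZMod 2) : a + a = 0 := by revert a; decide

lemma mod2_add_self {M : Type*} [AddCommGroup M] [Module (ZMod 2) M] (a : M) : a + a = 0 := by
  rw [← two_smul (ZMod 2) a, show (2 : ZMod 2) = 0 by decide, zero_smul]

/-- pulling a linear combination through `mulVec`. -/
lemma swap_mulVec_sum {α β γ : Type} [Fintype α] [Fintype β] [Fintype γ]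
    (M : Matrix γ α (ZMod 2)) (u : α → β → ZMod 2) (f : β → ZMod 2) (i : γ) :
    (M *ᵥ fun a => ∑ j, u a j * f j) i = ∑ j, f j * (M *ᵥ fun a => u a j) i := by
  simp only [mulVec, dotProduct, Finset.mul_sum]
  rw [Finset.sum_comm]
  exact Finset.sum_congr rfl fun j _ => Finset.sum_congr rfl fun a _ => by ring

lemma swap2 {β γ : Type} [Fintype β] [Fintype γ] (g : γ → ZMod 2) (dd : γ → β → ZMod 2)
    (u : β → ZMod 2) (hg : ∀ j', ∑ j, g j * dd j j' = 0) :
    ∑ j, g j * ∑ j', dd j j' * u j' = 0 := by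
  simp only [Finset.mul_sum]
  rw [Finset.sum_comm]
  have key : ∀ j', ∑ j, g j * (dd j j' * u j') = (∑ j, g j * dd j j') * u j' := by
    intro j'
    rw [Finset.sum_mul]
    exact Finset.sum_congr rfl fun j _ => by ring
  simp [key, hg]

lemma count_bound {γ : Type} [Fintype γ] (y : γ → ZMod 2) (norms : γ → ℕ) (n1 n2 : ℕ)
    (h1 : ∀ j, y j ≠ 0 → n1 ≤ norms j) (h2 : n2 ≤ hammingNorm y) :
    n1 * n2 ≤ ∑ j, norms j := by
  have step1 : n1 * n2 ≤ hammingNorm y * n1 := by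
    rw [mul_comm]; exact Nat.mul_le_mul_right _ h2
  have step2 : hammingNorm y * n1 ≤ ∑ j ∈ Finset.univ.filter (fun j => y j ≠ 0), norms j := by
    rw [hammingNorm, ← smul_eq_mul]
    exact Finset.card_nsmul_le_sum _ _ _ (fun j hj => h1 j (Finset.mem_filter.1 hj).2)
  have step3 : ∑ j ∈ Finset.univ.filter (fun j => y j ≠ 0), norms j ≤ ∑ j, norms j :=
    Finset.sum_le_sum_of_subset (Finset.filter_subset _ _)
  omega

section Aux3

variable {α β : Type} [Fintype α] [Fintype β]

lemma hammingNorm_sumElim {γ : Type*} [DecidableEq γ] [Zero γ]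
    (u : α → γ) (v : β → γ) :
    hammingNorm (Sum.elim u v) = hammingNorm u + hammingNorm v := by
  simp only [hammingNorm, Finset.card_filter]
  rw [Fintype.sum_sum_type]
  simp
  congr 1 <;> refine Finset.sum_congr rfl fun _ _ => ?_ <;> split_ifs <;> simp_all

lemma hammingNorm_rows (u : α × β → ZMod 2) :
    hammingNorm u = ∑ i, hammingNorm (fun j => u (i, j)) := by
  simp only [hammingNorm, Finset.card_filter]
  rw [Fintype.sum_prod_type]

lemma hammingNorm_cols (u : α × β → ZMod 2) :
    hammingNorm u = ∑ j, hammingNorm (fun i => u (i, j)) := by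
  simp only [hammingNorm, Finset.card_filter]
  rw [Fintype.sum_prod_type_right]

lemma hammingNorm_prodMul (x : α → ZMod 2) (y : β → ZMod 2) :
    hammingNorm (fun p : α × β => x p.1 * y p.2) = hammingNorm x * hammingNorm y := by
  rw [hammingNorm_rows]
  have h : ∀ i, hammingNorm (fun j => x i * y j) = if x i ≠ 0 then hammingNorm y else 0 := by
    intro i
    by_cases hx : x i = 0
    · have h0 : (fun j => x i * y j) = (0 : β → ZMod 2) := by funext j; simp [hx]
      rw [h0, hammingNorm_zero, if_neg (not_not_intro hx)]
    · have h1 : x i = 1 := zmod2_ne_zero hx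
      simp [hx, h1]
  simp only [h]
  rw [Finset.sum_ite, Finset.sum_const, Finset.sum_const_zero, add_zero, smul_eq_mul]
  rfl

lemma kron_one_mulVec {m m' n : Type} [Fintype m] [Fintype m'] [Fintype n] [DecidableEq n]
    (M : Matrix m' m (ZMod 2)) (u : m × n → ZMod 2) (i : m') (j : n) :
    ((M ⊗ₖ (1 : Matrix n n (ZMod 2))) *ᵥ u) (i, j) = (M *ᵥ fun i' => u (i', j)) i := by
  simp only [mulVec, dotProduct, Fintype.sum_prod_type, kroneckerMap_apply, Matrix.one_apply,
    mul_ite, mul_one, mul_zero, ite_mul, zero_mul]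
  refine Finset.sum_congr rfl fun i' _ => ?_
  rw [Finset.sum_ite_eq]
  simp

lemma one_kron_mulVec {m n n' : Type} [Fintype m] [Fintype n] [Fintype n'] [DecidableEq m]
    (N : Matrix n' n (ZMod 2)) (u : m × n → ZMod 2) (i : m) (j : n') :
    (((1 : Matrix m m (ZMod 2)) ⊗ₖ N) *ᵥ u) (i, j) = (N *ᵥ fun j' => u (i, j')) j := by
  simp only [mulVec, dotProduct, Fintype.sum_prod_type, kroneckerMap_apply, Matrix.one_apply,
    ite_mul, one_mul, zero_mul]
  rw [Finset.sum_eq_single_of_mem i (Finset.mem_univ i) (fun b _ hb => by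
    simp [if_neg (Ne.symm hb)])]
  simp

end Aux3
/-- The action of the Leibniz-boundary block matrix on a vector, componentwise. -/
lemma blockmv {α β γ δ ε : Type} [Fintype α] [Fintype β] [Fintype γ] [Fintype δ] [Fintype ε]
    [DecidableEq δ] [DecidableEq β] [DecidableEq ε]
    (M : Matrix α β (ZMod 2)) (M' : Matrix β γ (ZMod 2)) (N : Matrix ε δ (ZMod 2))
    (x : (β × δ) ⊕ (γ × ε) → ZMod 2) :
    (Matrix.fromBlocks (M ⊗ₖ (1 : Matrix δ δ (ZMod 2))) 0
        ((1 : Matrix β β (ZMod 2)) ⊗ₖ N) (M' ⊗ₖ (1 : Matrix ε ε (ZMod 2)))).mulVecLin x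
    = Sum.elim (fun p => (M *ᵥ fun b => x (Sum.inl (b, p.2))) p.1)
        (fun p => (N *ᵥ fun d => x (Sum.inl (p.1, d))) p.2
          + (M' *ᵥ fun c => x (Sum.inr (c, p.2))) p.1) := by
  rw [Matrix.mulVecLin_apply, Matrix.fromBlocks_mulVec]
  funext q
  rcases q with p | p
  · rcases p with ⟨i, j⟩
    simp only [Sum.elim_inl, Pi.add_apply, Matrix.zero_mulVec, Pi.zero_apply, add_zero]
    exact kron_one_mulVec M (x ∘ Sum.inl) i j
  · rcases p with ⟨i, j⟩
    simp only [Sum.elim_inr, Pi.add_apply]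
    rw [show ((1 : Matrix β β (ZMod 2)) ⊗ₖ N *ᵥ x ∘ Sum.inl) (i, j)
        = (N *ᵥ fun d => x (Sum.inl (i, d))) j from one_kron_mulVec N (x ∘ Sum.inl) i j,
      show (M' ⊗ₖ (1 : Matrix ε ε (ZMod 2)) *ᵥ x ∘ Sum.inr) (i, j)
        = (M' *ᵥ fun c => x (Sum.inr (c, j))) i from kron_one_mulVec M' (x ∘ Sum.inr) i j]
lemma sum_mul_swap {α β : Type} [Fintype α] [Fintype β] (a : α → ZMod 2) (b : β → ZMod 2)
    (m : α → β → ZMod 2) :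
    ∑ j, (∑ i, a i * m i j) * b j = ∑ i, a i * ∑ j, m i j * b j := by
  simp only [Finset.sum_mul, Finset.mul_sum]
  rw [Finset.sum_comm]
  exact Finset.sum_congr rfl fun i _ => Finset.sum_congr rfl fun j _ => by ring
section Aux2




/-- a separating functional for a subspace of `𝔽₂ⁿ`, in dot-product form. -/
lemma exists_functional {n : Type} [Fintype n] [DecidableEq n]
    (W : Submodule (ZMod 2) (n → ZMod 2)) {y : n → ZMod 2} (hy : y ∉ W) :
    ∃ ℓ : n → ZMod 2, (∀ w ∈ W, ∑ i, ℓ i * w i = 0) ∧ ∑ i, ℓ i * y i = 1 := by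
  have hq : W.mkQ y ≠ 0 := by
    rw [Submodule.mkQ_apply, ne_eq, Submodule.Quotient.mk_eq_zero]; exact hy
  obtain ⟨φ, hφ⟩ : ∃ φ : Module.Dual (ZMod 2) ((n → ZMod 2) ⧸ W), φ (W.mkQ y) ≠ 0 := by
    by_contra hc
    push_neg at hc
    exact hq ((Module.forall_dual_apply_eq_zero_iff (ZMod 2) _).1 hc)
  set ψ : (n → ZMod 2) →ₗ[ZMod 2] ZMod 2 := φ ∘ₗ W.mkQ with hψ
  have key : ∀ v : n → ZMod 2, ψ v = ∑ i, ψ (fun j => if i = j then 1 else 0) * v i := by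
    intro v
    conv_lhs => rw [pi_eq_sum_univ v]
    rw [map_sum]
    refine Finset.sum_congr rfl fun i _ => ?_
    rw [_root_.map_smul, smul_eq_mul, mul_comm]
  refine ⟨fun i => ψ (fun j => if i = j then 1 else 0), ?_, ?_⟩
  · intro w hw
    rw [← key]
    simp [hψ, Submodule.Quotient.mk_eq_zero, hw, (Submodule.Quotient.mk_eq_zero W).2 hw]
  · rw [← key]
    exact zmod2_ne_zero hφ

/-- factoring a linear map through another whose kernel is smaller. -/
lemma factor_through {K : Type} [Field K] {M N O : Type*}
    [AddCommGroup M] [Module K M] [AddCommGroup N] [Module K N]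
    [AddCommGroup O] [Module K O]
    (f : M →ₗ[K] N) (g : M →ₗ[K] O) (h : LinearMap.ker g ≤ LinearMap.ker f) :
    ∃ h' : O →ₗ[K] N, (∀ x, h' (g x) = f x) ∧
      ∀ o, h' o ∈ LinearMap.range f := by
  set p := LinearMap.ker g with hp
  set fbar := p.liftQ f h with hf
  set gbar := p.liftQ g le_rfl with hg
  have hginj : LinearMap.ker gbar = ⊥ := Submodule.ker_liftQ_eq_bot _ _ _ le_rfl
  obtain ⟨s, hs⟩ := gbar.exists_leftInverse_of_injective hginj
  refine ⟨fbar ∘ₗ s, fun x => ?_, fun o => ?_⟩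
  · have : g x = gbar (p.mkQ x) := by simp [hg]
    rw [this]
    have := LinearMap.congr_fun hs (p.mkQ x)
    simp only [LinearMap.comp_apply] at this ⊢
    rw [this]
    simp [hf]
  · have : fbar (s o) ∈ LinearMap.range fbar := ⟨s o, rfl⟩
    rwa [Submodule.range_liftQ] at this

end Aux2
/-- Zeng–Pryadko, Eq. (51)/Thm. 17; special case: for a chain
complex `C` (displayed around degree `k`: `C_{k+1} --d2--> C_k --d1--> C_{k-1}
--d0--> C_{k-2}`) and a two-term complex `D = (D₁ --dD--> D₀)`, the `k`-systolic
distance of the tensor product complex satisfies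
`d_k(C⊗D) = min(d_{k-1}(C)·d₁(D), d_k(C)·d₀(D))`.
Here `(C⊗D)_k = C_{k-1}⊗D₁ ⊕ C_k⊗D₀` etc., with the Leibniz boundary given in
block form by Kronecker products. -/
theorem product_complex_systolic_distance
    (a2 a1 a0 am nD1 nD0 : ℕ)
    (d2 : Matrix (Fin a1) (Fin a2) (ZMod 2))   -- ∂_{k+1}
    (d1 : Matrix (Fin a0) (Fin a1) (ZMod 2))   -- ∂_k
    (d0 : Matrix (Fin am) (Fin a0) (ZMod 2))   -- ∂_{k-1}
    (h21 : d1 * d2 = 0) (h10 : d0 * d1 = 0)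
    (dD : Matrix (Fin nD0) (Fin nD1) (ZMod 2)) :
    sysDist
      (Matrix.fromBlocks (d0 ⊗ₖ (1 : Matrix (Fin nD1) (Fin nD1) (ZMod 2))) 0
        ((1 : Matrix (Fin a0) (Fin a0) (ZMod 2)) ⊗ₖ dD)
        (d1 ⊗ₖ (1 : Matrix (Fin nD0) (Fin nD0) (ZMod 2))))
      (Matrix.fromBlocks (d1 ⊗ₖ (1 : Matrix (Fin nD1) (Fin nD1) (ZMod 2))) 0
        ((1 : Matrix (Fin a1) (Fin a1) (ZMod 2)) ⊗ₖ dD)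
        (d2 ⊗ₖ (1 : Matrix (Fin nD0) (Fin nD0) (ZMod 2))))
      = min
          (sysDist d0 d1 * sysDist dD (0 : Matrix (Fin nD1) (Fin 0) (ZMod 2)))
          (sysDist d1 d2 * sysDist (0 : Matrix (Fin 0) (Fin nD0) (ZMod 2)) dD) := by
  classical
  apply le_antisymm
  · apply le_min
    · -- LHS ≤ d_{k-1}(C) * d₁(D)
      by_cases h1 : sysDist d0 d1 = ⊤
      · rw [h1, ENat.top_mul (sysDist_ne_zero _ _)]; exact le_top
      by_cases h2 : sysDist dD (0 : Matrix (Fin nD1) (Fin 0) (ZMod 2)) = ⊤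
      · rw [h2, ENat.mul_top (sysDist_ne_zero _ _)]; exact le_top
      obtain ⟨xx, hx1, hx2, hx3⟩ := sysDist_spec _ _ h1
      obtain ⟨yy, hy1, hy2, hy3⟩ := sysDist_spec _ _ h2
      have hyne : yy ≠ 0 := fun h => hy2 (h ▸ Submodule.zero_mem _)
      set z : (Fin a0 × Fin nD1) ⊕ (Fin a1 × Fin nD0) → ZMod 2 :=
        Sum.elim (fun p => xx p.1 * yy p.2) 0 with hz
      have hx1' : ∀ i, (d0 *ᵥ xx) i = 0 := fun i => by
        have := congrFun hx1 i; rwa [Matrix.mulVecLin_apply] at this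
      have hy1' : ∀ j, (dD *ᵥ yy) j = 0 := fun j => by
        have := congrFun hy1 j; rwa [Matrix.mulVecLin_apply] at this
      have hcyc : (Matrix.fromBlocks (d0 ⊗ₖ (1 : Matrix (Fin nD1) (Fin nD1) (ZMod 2))) 0
          ((1 : Matrix (Fin a0) (Fin a0) (ZMod 2)) ⊗ₖ dD)
          (d1 ⊗ₖ (1 : Matrix (Fin nD0) (Fin nD0) (ZMod 2)))).mulVecLin z = 0 := by
        rw [blockmv]
        funext s
        rcases s with ⟨i, j⟩ | ⟨i, j⟩
        · show (d0 *ᵥ fun b => z (Sum.inl (b, j))) i = 0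
          have : (fun b => z (Sum.inl (b, j))) = fun b => xx b * yy j := rfl
          rw [this, mulVec_mul_const, hx1', zero_mul]
        · show (dD *ᵥ fun d => z (Sum.inl (i, d))) j + (d1 *ᵥ fun c => z (Sum.inr (c, j))) i = 0
          have e1 : (fun d => z (Sum.inl (i, d))) = fun d => xx i * yy d := rfl
          have e2 : (fun c => z (Sum.inr (c, j))) = (0 : Fin a1 → ZMod 2) := rfl
          rw [e1, e2, Matrix.mulVec_zero, mulVec_const_mul, hy1', mul_zero]
          simp
      have hnb : z ∉ LinearMap.range (Matrix.fromBlocks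
          (d1 ⊗ₖ (1 : Matrix (Fin nD1) (Fin nD1) (ZMod 2))) 0
          ((1 : Matrix (Fin a1) (Fin a1) (ZMod 2)) ⊗ₖ dD)
          (d2 ⊗ₖ (1 : Matrix (Fin nD0) (Fin nD0) (ZMod 2)))).mulVecLin := by
        rintro ⟨w, hw⟩
        rw [blockmv] at hw
        obtain ⟨j₀, hj₀⟩ := Function.ne_iff.1 hyne
        have hyj : yy j₀ = 1 := zmod2_ne_zero (by simpa using hj₀)
        apply hx2
        refine ⟨fun i' => w (Sum.inl (i', j₀)), ?_⟩
        funext i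
        have hcomp := congrFun hw (Sum.inl (i, j₀))
        simp only [Sum.elim_inl] at hcomp
        rw [Matrix.mulVecLin_apply]
        show (d1 *ᵥ fun i' => w (Sum.inl (i', j₀))) i = xx i
        rw [hcomp]
        show xx i * yy j₀ = xx i
        rw [hyj, mul_one]
      calc sysDist _ _ ≤ (hammingNorm z : ℕ∞) := sysDist_le _ _ hcyc hnb
        _ = ((hammingNorm xx * hammingNorm yy : ℕ) : ℕ∞) := by
            rw [hz, hammingNorm_sumElim, hammingNorm_zero, add_zero, hammingNorm_prodMul]
        _ = _ := by rw [hx3, hy3, Nat.cast_mul]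
    · -- LHS ≤ d_k(C) * d₀(D)
      by_cases h1 : sysDist d1 d2 = ⊤
      · rw [h1, ENat.top_mul (sysDist_ne_zero _ _)]; exact le_top
      by_cases h2 : sysDist (0 : Matrix (Fin 0) (Fin nD0) (ZMod 2)) dD = ⊤
      · rw [h2, ENat.mul_top (sysDist_ne_zero _ _)]; exact le_top
      obtain ⟨xx, hx1, hx2, hx3⟩ := sysDist_spec _ _ h1
      obtain ⟨yy, hy1, hy2, hy3⟩ := sysDist_spec _ _ h2
      set z : (Fin a0 × Fin nD1) ⊕ (Fin a1 × Fin nD0) → ZMod 2 :=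
        Sum.elim 0 (fun p => xx p.1 * yy p.2) with hz
      have hx1' : ∀ i, (d1 *ᵥ xx) i = 0 := fun i => by
        have := congrFun hx1 i; rwa [Matrix.mulVecLin_apply] at this
      have hcyc : (Matrix.fromBlocks (d0 ⊗ₖ (1 : Matrix (Fin nD1) (Fin nD1) (ZMod 2))) 0
          ((1 : Matrix (Fin a0) (Fin a0) (ZMod 2)) ⊗ₖ dD)
          (d1 ⊗ₖ (1 : Matrix (Fin nD0) (Fin nD0) (ZMod 2)))).mulVecLin z = 0 := by
        rw [blockmv]
        funext s
        rcases s with ⟨i, j⟩ | ⟨i, j⟩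
        · show (d0 *ᵥ fun b => z (Sum.inl (b, j))) i = 0
          have : (fun b => z (Sum.inl (b, j))) = (0 : Fin a0 → ZMod 2) := rfl
          rw [this, Matrix.mulVec_zero]; rfl
        · show (dD *ᵥ fun d => z (Sum.inl (i, d))) j + (d1 *ᵥ fun c => z (Sum.inr (c, j))) i = 0
          have e1 : (fun d => z (Sum.inl (i, d))) = (0 : Fin nD1 → ZMod 2) := rfl
          have e2 : (fun c => z (Sum.inr (c, j))) = fun c => xx c * yy j := rfl
          rw [e1, e2, Matrix.mulVec_zero, mulVec_mul_const, hx1', zero_mul]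
          simp
      have hnb : z ∉ LinearMap.range (Matrix.fromBlocks
          (d1 ⊗ₖ (1 : Matrix (Fin nD1) (Fin nD1) (ZMod 2))) 0
          ((1 : Matrix (Fin a1) (Fin a1) (ZMod 2)) ⊗ₖ dD)
          (d2 ⊗ₖ (1 : Matrix (Fin nD0) (Fin nD0) (ZMod 2)))).mulVecLin := by
        rintro ⟨w, hw⟩
        rw [blockmv] at hw
        obtain ⟨ℓ, hℓ1, hℓ2⟩ := exists_functional (LinearMap.range dD.mulVecLin) hy2
        apply hx2
        refine ⟨fun i' => ∑ j, w (Sum.inr (i', j)) * ℓ j, ?_⟩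
        funext i
        rw [Matrix.mulVecLin_apply, swap_mulVec_sum d2 (fun i' j => w (Sum.inr (i', j))) ℓ i]
        have hcomp : ∀ j : Fin nD0, (d2 *ᵥ fun i' => w (Sum.inr (i', j))) i
            = xx i * yy j + (dD *ᵥ fun j' => w (Sum.inl (i, j'))) j := by
          intro j
          have hcw := congrFun hw (Sum.inr (i, j))
          simp only [Sum.elim_inr] at hcw
          exact zmod2_rearrange hcw
        calc ∑ j, ℓ j * (d2 *ᵥ fun i' => w (Sum.inr (i', j))) i
            = ∑ j, (ℓ j * (xx i * yy j) + ℓ j * (dD *ᵥ fun j' => w (Sum.inl (i, j'))) j) := by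
              refine Finset.sum_congr rfl fun j _ => ?_
              rw [hcomp j, mul_add]
          _ = (∑ j, ℓ j * (xx i * yy j))
              + ∑ j, ℓ j * (dD *ᵥ fun j' => w (Sum.inl (i, j'))) j := Finset.sum_add_distrib
          _ = xx i := by
              have hz2 : ∑ j, ℓ j * (dD *ᵥ fun j' => w (Sum.inl (i, j'))) j = 0 := by
                have : (fun j => (dD *ᵥ fun j' => w (Sum.inl (i, j'))) j)
                    ∈ LinearMap.range dD.mulVecLin :=
                  ⟨fun j' => w (Sum.inl (i, j')), by funext j; rw [Matrix.mulVecLin_apply]⟩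
                exact hℓ1 _ this
              have hz1 : ∑ j, ℓ j * (xx i * yy j) = xx i := by
                rw [show ∑ j, ℓ j * (xx i * yy j) = xx i * ∑ j, ℓ j * yy j by
                  rw [Finset.mul_sum]; exact Finset.sum_congr rfl fun j _ => by ring]
                rw [hℓ2, mul_one]
              rw [hz1, hz2, add_zero]
      calc sysDist _ _ ≤ (hammingNorm z : ℕ∞) := sysDist_le _ _ hcyc hnb
        _ = ((hammingNorm xx * hammingNorm yy : ℕ) : ℕ∞) := by
            rw [hz, hammingNorm_sumElim, hammingNorm_zero, zero_add, hammingNorm_prodMul]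
        _ = _ := by rw [hx3, hy3, Nat.cast_mul]
  · -- min ≤ LHS
    refine le_sInf ?_
    rintro w ⟨x, hcyc, hnb, rfl⟩
    rw [blockmv] at hcyc
    have hc1 : ∀ (i : Fin am) (j : Fin nD1), (d0 *ᵥ fun i' => x (Sum.inl (i', j))) i = 0 := by
      intro i j
      have := congrFun hcyc (Sum.inl (i, j))
      simpa using this
    have hc2 : ∀ (i : Fin a0) (j : Fin nD0),
        (dD *ᵥ fun j' => x (Sum.inl (i, j'))) j + (d1 *ᵥ fun i' => x (Sum.inr (i', j))) i = 0 := by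
      intro i j
      have := congrFun hcyc (Sum.inr (i, j))
      simpa using this
    have hxsplit : hammingNorm x = hammingNorm (fun p : Fin a0 × Fin nD1 => x (Sum.inl p))
        + hammingNorm (fun p : Fin a1 × Fin nD0 => x (Sum.inr p)) := by
      rw [← hammingNorm_sumElim]
      congr 1
      funext q; rcases q with p | p <;> rfl
    by_cases hcb : ∃ f : Fin nD1 → ZMod 2,
        (fun i => ∑ j, x (Sum.inl (i, j)) * f j) ∉ LinearMap.range d1.mulVecLin
    · -- Case (b): detection in H_{k-1}(C) ⊗ H₁(D)
      obtain ⟨f, hUf⟩ := hcb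
      obtain ⟨ℓ, hℓ1, hℓ2⟩ := exists_functional (LinearMap.range d1.mulVecLin) hUf
      set y : Fin nD1 → ZMod 2 := fun j => ∑ i, ℓ i * x (Sum.inl (i, j)) with hy
      have hycyc : dD.mulVecLin y = 0 := by
        funext j'
        rw [Matrix.mulVecLin_apply]
        have e1 : (dD *ᵥ y) j' = ∑ i, ℓ i * (dD *ᵥ fun j => x (Sum.inl (i, j))) j' := by
          simp only [mulVec, dotProduct, hy, Finset.mul_sum]
          rw [Finset.sum_comm]
          exact Finset.sum_congr rfl fun i _ => Finset.sum_congr rfl fun j _ => by ring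
        rw [e1]
        have e2 : ∀ i : Fin a0, (dD *ᵥ fun j => x (Sum.inl (i, j))) j'
            = (d1 *ᵥ fun i' => x (Sum.inr (i', j'))) i :=
          fun i => zmod2_add_eq_zero (hc2 i j')
        simp only [e2]
        have hmem : (fun i => (d1 *ᵥ fun i' => x (Sum.inr (i', j'))) i)
            ∈ LinearMap.range d1.mulVecLin :=
          ⟨fun i' => x (Sum.inr (i', j')), by funext i; rw [Matrix.mulVecLin_apply]⟩
        exact hℓ1 _ hmem
      have hyf : ∑ j, y j * f j = 1 := by
        have e : ∑ j, y j * f j = ∑ i, ℓ i * ∑ j, x (Sum.inl (i, j)) * f j := by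
          simp only [hy]
          exact sum_mul_swap ℓ f (fun i j => x (Sum.inl (i, j)))
        rw [e, hℓ2]
      have hyne : y ≠ 0 := by
        intro h0
        rw [h0] at hyf
        simp at hyf
      have hyn0 : y ∉ LinearMap.range (0 : Matrix (Fin nD1) (Fin 0) (ZMod 2)).mulVecLin := by
        rintro ⟨v, hv⟩
        rw [Matrix.mulVecLin_zero] at hv
        exact hyne (by rw [← hv]; rfl)
      have hs2 : sysDist dD (0 : Matrix (Fin nD1) (Fin 0) (ZMod 2)) ≤ (hammingNorm y : ℕ∞) :=
        sysDist_le _ _ hycyc hyn0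
      have hcols : ∀ j, y j ≠ 0 →
          sysDist d0 d1 ≤ (hammingNorm (fun i => x (Sum.inl (i, j))) : ℕ∞) := by
        intro j hyj
        apply sysDist_le
        · funext i; rw [Matrix.mulVecLin_apply]; exact hc1 i j
        · rintro ⟨p, hp⟩
          apply hyj
          show ∑ i, ℓ i * x (Sum.inl (i, j)) = 0
          exact hℓ1 _ ⟨p, hp⟩
      obtain ⟨j₀, hj₀⟩ := Function.ne_iff.1 hyne
      have hj₀' : y j₀ ≠ 0 := by simpa using hj₀
      have hs1top : sysDist d0 d1 ≠ ⊤ := by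
        intro h
        have := hcols j₀ hj₀'
        rw [h, top_le_iff] at this
        exact ENat.coe_ne_top _ this
      have hs2top : sysDist dD (0 : Matrix (Fin nD1) (Fin 0) (ZMod 2)) ≠ ⊤ := by
        intro h
        rw [h, top_le_iff] at hs2
        exact ENat.coe_ne_top _ hs2
      set n1 := (sysDist d0 d1).toNat with hn1def
      set n2 := (sysDist dD (0 : Matrix (Fin nD1) (Fin 0) (ZMod 2))).toNat with hn2def
      have hn1 : (n1 : ℕ∞) = sysDist d0 d1 := ENat.coe_toNat hs1top
      have hn2 : (n2 : ℕ∞) = sysDist dD (0 : Matrix (Fin nD1) (Fin 0) (ZMod 2)) :=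
        ENat.coe_toNat hs2top
      have hcb2 : n1 * n2 ≤ ∑ j, hammingNorm (fun i => x (Sum.inl (i, j))) := by
        apply count_bound y _ n1 n2
        · intro j hyj
          have := hcols j hyj
          rw [← hn1] at this
          exact Nat.cast_le.mp this
        · have := hs2
          rw [← hn2] at this
          exact Nat.cast_le.mp this
      have hnat : n1 * n2 ≤ hammingNorm x := by
        have hU := hammingNorm_cols (fun p : Fin a0 × Fin nD1 => x (Sum.inl p))
        omega
      calc min (sysDist d0 d1 * sysDist dD (0 : Matrix (Fin nD1) (Fin 0) (ZMod 2)))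
            (sysDist d1 d2 * sysDist (0 : Matrix (Fin 0) (Fin nD0) (ZMod 2)) dD)
          ≤ sysDist d0 d1 * sysDist dD (0 : Matrix (Fin nD1) (Fin 0) (ZMod 2)) := min_le_left _ _
        _ = ((n1 * n2 : ℕ) : ℕ∞) := by rw [Nat.cast_mul, hn1, hn2]
        _ ≤ (hammingNorm x : ℕ∞) := Nat.cast_le.mpr hnat
    · by_cases hcg : ∃ g : Fin nD0 → ZMod 2, (∀ j', ∑ j, g j * dD j j' = 0) ∧
          (fun i => ∑ j, x (Sum.inr (i, j)) * g j) ∉ LinearMap.range d2.mulVecLin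
      · -- Case (a): detection in H_k(C) ⊗ H₀(D)
        obtain ⟨g, hg, hVg⟩ := hcg
        have hVgcyc : d1.mulVecLin (fun i => ∑ j, x (Sum.inr (i, j)) * g j) = 0 := by
          funext i
          rw [Matrix.mulVecLin_apply, swap_mulVec_sum d1 (fun i' j => x (Sum.inr (i', j))) g i]
          have e2 : ∀ j, (d1 *ᵥ fun i' => x (Sum.inr (i', j))) i
              = ∑ j', dD j j' * x (Sum.inl (i, j')) := fun j =>
            (zmod2_add_eq_zero (hc2 i j)).symm
          simp only [e2]
          exact swap2 g (fun j j' => dD j j') (fun j' => x (Sum.inl (i, j'))) hg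
        have hs1 : sysDist d1 d2 ≤ (hammingNorm (fun i => ∑ j, x (Sum.inr (i, j)) * g j) : ℕ∞) :=
          sysDist_le _ _ hVgcyc hVg
        have hrows : ∀ i, (∑ j, x (Sum.inr (i, j)) * g j) ≠ 0 →
            sysDist (0 : Matrix (Fin 0) (Fin nD0) (ZMod 2)) dD
              ≤ (hammingNorm (fun j => x (Sum.inr (i, j))) : ℕ∞) := by
          intro i hvi
          apply sysDist_le
          · funext t; exact t.elim0
          · rintro ⟨p, hp⟩
            apply hvi
            have hrow : ∀ j, x (Sum.inr (i, j)) = ∑ j', dD j j' * p j' := by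
              intro j
              have := congrFun hp j
              rw [Matrix.mulVecLin_apply] at this
              exact this.symm
            rw [show (∑ j, x (Sum.inr (i, j)) * g j) = ∑ j, g j * ∑ j', dD j j' * p j' from
              Finset.sum_congr rfl fun j _ => by rw [hrow j]; ring]
            exact swap2 g (fun j j' => dD j j') p hg
        have hVgne : (fun i => ∑ j, x (Sum.inr (i, j)) * g j) ≠ 0 := by
          intro h
          exact hVg (h ▸ Submodule.zero_mem _)
        obtain ⟨i₀, hi₀⟩ := Function.ne_iff.1 hVgne
        have hi₀' : (∑ j, x (Sum.inr (i₀, j)) * g j) ≠ 0 := by simpa using hi₀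
        have hs1top : sysDist d1 d2 ≠ ⊤ := by
          intro h
          rw [h, top_le_iff] at hs1
          exact ENat.coe_ne_top _ hs1
        have hs2top : sysDist (0 : Matrix (Fin 0) (Fin nD0) (ZMod 2)) dD ≠ ⊤ := by
          intro h
          have := hrows i₀ hi₀'
          rw [h, top_le_iff] at this
          exact ENat.coe_ne_top _ this
        set n1 := (sysDist d1 d2).toNat with hn1def
        set n2 := (sysDist (0 : Matrix (Fin 0) (Fin nD0) (ZMod 2)) dD).toNat with hn2def
        have hn1 : (n1 : ℕ∞) = sysDist d1 d2 := ENat.coe_toNat hs1top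
        have hn2 : (n2 : ℕ∞) = sysDist (0 : Matrix (Fin 0) (Fin nD0) (ZMod 2)) dD :=
          ENat.coe_toNat hs2top
        have hcb2 : n2 * n1 ≤ ∑ i, hammingNorm (fun j => x (Sum.inr (i, j))) := by
          apply count_bound (fun i => ∑ j, x (Sum.inr (i, j)) * g j) _ n2 n1
          · intro i hvi
            have := hrows i hvi
            rw [← hn2] at this
            exact Nat.cast_le.mp this
          · have := hs1
            rw [← hn1] at this
            exact Nat.cast_le.mp this
        have hnat : n1 * n2 ≤ hammingNorm x := by
          have hV := hammingNorm_rows (fun p : Fin a1 × Fin nD0 => x (Sum.inr p))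
          have : n1 * n2 = n2 * n1 := Nat.mul_comm _ _
          omega
        calc min (sysDist d0 d1 * sysDist dD (0 : Matrix (Fin nD1) (Fin 0) (ZMod 2)))
              (sysDist d1 d2 * sysDist (0 : Matrix (Fin 0) (Fin nD0) (ZMod 2)) dD)
            ≤ sysDist d1 d2 * sysDist (0 : Matrix (Fin 0) (Fin nD0) (ZMod 2)) dD := min_le_right _ _
          _ = ((n1 * n2 : ℕ) : ℕ∞) := by rw [Nat.cast_mul, hn1, hn2]
          _ ≤ (hammingNorm x : ℕ∞) := Nat.cast_le.mpr hnat
      · -- Künneth injectivity: both detections trivial ⟹ x is a boundary, contradiction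
        exfalso
        apply hnb
        push_neg at hcb hcg
        -- hcb : ∀ f, U·f ∈ im d1 ; hcg : ∀ g ⊥ im dD, V·g ∈ im d2.  Conclude x is a boundary.
        have hUcol : ∀ j, (fun i => x (Sum.inl (i, j))) ∈ LinearMap.range d1.mulVecLin := by
          intro j
          have := hcb (fun j' => if j = j' then 1 else 0)
          have e : (fun i => ∑ j', x (Sum.inl (i, j')) * if j = j' then 1 else 0)
              = fun i => x (Sum.inl (i, j)) := by
            funext i
            simp [mul_ite, mul_one, mul_zero, Finset.sum_ite_eq]
          rwa [e] at this
        choose Pc hPc using hUcol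
        have hPc' : ∀ j i, (d1 *ᵥ Pc j) i = x (Sum.inl (i, j)) := fun j i => by
          have := congrFun (hPc j) i; rwa [Matrix.mulVecLin_apply] at this
        set V' : Fin a1 → Fin nD0 → ZMod 2 :=
          fun i j => x (Sum.inr (i, j)) + ∑ j', dD j j' * Pc j' i with hV'def
        have hV'col : ∀ j, d1.mulVecLin (fun i => V' i j) = 0 := by
          intro j
          funext i
          rw [Matrix.mulVecLin_apply]
          have expand : (d1 *ᵥ fun i' => V' i' j) i
              = (d1 *ᵥ fun i' => x (Sum.inr (i', j))) i + ∑ j', dD j j' * (d1 *ᵥ Pc j') i := by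
            simp only [hV'def, mulVec, dotProduct, mul_add, Finset.sum_add_distrib,
              Finset.mul_sum]
            congr 1
            rw [Finset.sum_comm]
            exact Finset.sum_congr rfl fun j' _ => Finset.sum_congr rfl fun i' _ => by ring
          rw [expand]
          have e1 : (d1 *ᵥ fun i' => x (Sum.inr (i', j))) i
              = (dD *ᵥ fun j' => x (Sum.inl (i, j'))) j :=
            (zmod2_add_eq_zero (hc2 i j)).symm
          have e2 : ∑ j', dD j j' * (d1 *ᵥ Pc j') i
              = (dD *ᵥ fun j' => x (Sum.inl (i, j'))) j := by
            simp only [hPc']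
            rfl
          rw [e1, e2]
          exact zmod2_add_self _
        have hV'g : ∀ g : Fin nD0 → ZMod 2, (∀ j', ∑ j, g j * dD j j' = 0) →
            (fun i => ∑ j, V' i j * g j) ∈ LinearMap.range d2.mulVecLin := by
          intro g hgg
          have e : (fun i => ∑ j, V' i j * g j) = fun i => ∑ j, x (Sum.inr (i, j)) * g j := by
            funext i
            simp only [hV'def, add_mul, Finset.sum_add_distrib]
            have hz : ∑ j, (∑ j', dD j j' * Pc j' i) * g j = 0 := by
              rw [show ∑ j, (∑ j', dD j j' * Pc j' i) * g j
                  = ∑ j, g j * ∑ j', dD j j' * Pc j' i from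
                Finset.sum_congr rfl fun j _ => by ring]
              exact swap2 g (fun j j' => dD j j') (fun j' => Pc j' i) hgg
            rw [hz, add_zero]
          rw [e]
          exact hcg g hgg
        -- linear-algebra factorization
        set Φ : (Fin nD0 → ZMod 2) →ₗ[ZMod 2] (Fin a1 → ZMod 2) :=
          (Matrix.of fun i j => V' i j).mulVecLin with hΦdef
        have hΦapp : ∀ g i, Φ g i = ∑ j, V' i j * g j := by
          intro g i
          simp [hΦdef, Matrix.mulVecLin_apply, mulVec, dotProduct]
        set T : (Fin nD0 → ZMod 2) →ₗ[ZMod 2] (Fin nD1 → ZMod 2) :=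
          (dD.transpose).mulVecLin with hTdef
        have hTapp : ∀ g j', T g j' = ∑ j, g j * dD j j' := by
          intro g j'
          simp only [hTdef, Matrix.mulVecLin_apply, mulVec, dotProduct, Matrix.transpose_apply]
          exact Finset.sum_congr rfl fun j _ => by ring
        set W2 := LinearMap.range d2.mulVecLin with hW2
        have hker : LinearMap.ker T ≤ LinearMap.ker (W2.mkQ ∘ₗ Φ) := by
          intro g hgk
          rw [LinearMap.mem_ker] at hgk ⊢
          have hgg : ∀ j', ∑ j, g j * dD j j' = 0 := fun j' => by
            rw [← hTapp g j', hgk]; rfl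
          have hmem : Φ g ∈ W2 := by
            have hm := hV'g g hgg
            have e : Φ g = fun i => ∑ j, V' i j * g j := funext fun i => hΦapp g i
            rwa [e]
          rw [LinearMap.comp_apply, Submodule.mkQ_apply, Submodule.Quotient.mk_eq_zero]
          exact hmem
        obtain ⟨hmap, hfac, hrange⟩ := factor_through (W2.mkQ ∘ₗ Φ) T hker
        have hcyc_rep : ∀ j : Fin nD1, ∃ c : Fin a1 → ZMod 2,
            d1.mulVecLin c = 0 ∧ W2.mkQ c = hmap (fun j' => if j = j' then 1 else 0) := by
          intro j
          obtain ⟨g0, hg0⟩ := hrange (fun j' => if j = j' then 1 else 0)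
          refine ⟨Φ g0, ?_, ?_⟩
          · funext i
            rw [Matrix.mulVecLin_apply]
            have e : (d1 *ᵥ Φ g0) i = (d1 *ᵥ fun i' => ∑ j, V' i' j * g0 j) i :=
              congrArg (fun v => (d1 *ᵥ v) i) (funext fun i' => hΦapp g0 i')
            rw [e, swap_mulVec_sum d1 (fun i' j => V' i' j) g0 i]
            have hz : ∀ j, (d1 *ᵥ fun i' => V' i' j) i = 0 := fun j => by
              have := congrFun (hV'col j) i; rwa [Matrix.mulVecLin_apply] at this
            simp [hz]
          · simpa using hg0
        choose cc hcc1 hcc2 using hcyc_rep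
        have hV'' : ∀ j : Fin nD0,
            (fun i => V' i j + ∑ j', dD j j' * cc j' i) ∈ W2 := by
          intro j
          suffices hq0 : W2.mkQ (fun i => V' i j + ∑ j', dD j j' * cc j' i) = 0 by
            have := (Submodule.Quotient.mk_eq_zero W2).1 (by rwa [Submodule.mkQ_apply] at hq0)
            exact this
          have hfn : (fun i => V' i j + ∑ j', dD j j' * cc j' i)
              = (fun i => V' i j) + ∑ j', dD j j' • cc j' := by
            funext i
            simp [Finset.sum_apply, Pi.smul_apply, smul_eq_mul, Pi.add_apply]
          rw [hfn]
          have h1 : W2.mkQ (fun i => V' i j) = hmap (fun j' => dD j j') := by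
            have e : (fun i => V' i j) = Φ (fun j'' => if j = j'' then 1 else 0) := by
              funext i
              rw [hΦapp]
              simp [mul_ite, mul_one, mul_zero, Finset.sum_ite_eq]
            have hTe : T (fun j'' => if j = j'' then (1 : ZMod 2) else 0)
                = fun j' => dD j j' := by
              funext j'
              rw [hTapp]
              simp [ite_mul, one_mul, zero_mul, Finset.sum_ite_eq]
            rw [e, ← hTe, hfac]
            try rfl
          have h2 : hmap (fun j' => dD j j')
              = ∑ j', dD j j' • hmap (fun t => if j' = t then 1 else 0) := by
            conv_lhs => rw [pi_eq_sum_univ (fun j' => dD j j')]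
            rw [map_sum]
            exact Finset.sum_congr rfl fun j' _ => by rw [_root_.map_smul]
          have key : W2.mkQ ((fun i => V' i j) + ∑ j', dD j j' • cc j')
              = hmap (fun j' => dD j j') + ∑ j', dD j j' • W2.mkQ (cc j') := by
            rw [map_add, h1, map_sum]
            simp only [_root_.map_smul]
          rw [key, h2]
          have e3 : ∑ j', dD j j' • W2.mkQ (cc j')
              = ∑ j', dD j j' • hmap (fun t => if j' = t then 1 else 0) :=
            Finset.sum_congr rfl fun j' _ => by rw [hcc2]
          rw [e3]
          exact mod2_add_self _
        have hV''2 : ∀ j : Fin nD0, ∃ q : Fin a2 → ZMod 2,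
            d2.mulVecLin q = fun i => V' i j + ∑ j', dD j j' * cc j' i := fun j => hV'' j
        choose qq hqq using hV''2
        refine ⟨Sum.elim (fun p => Pc p.2 p.1 + cc p.2 p.1) (fun p => qq p.2 p.1), ?_⟩
        rw [blockmv]
        funext s
        rcases s with ⟨i, j⟩ | ⟨i, j⟩
        · show (d1 *ᵥ fun i' => Pc j i' + cc j i') i = x (Sum.inl (i, j))
          have hsplit2 : (d1 *ᵥ fun i' => Pc j i' + cc j i') i
              = (d1 *ᵥ Pc j) i + (d1 *ᵥ cc j) i := by
            simp [mulVec, dotProduct, mul_add, Finset.sum_add_distrib]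
          rw [hsplit2, hPc' j i]
          have hz : (d1 *ᵥ cc j) i = 0 := by
            have := congrFun (hcc1 j) i; rwa [Matrix.mulVecLin_apply] at this
          rw [hz, add_zero]
        · show (dD *ᵥ fun j' => Pc j' i + cc j' i) j + (d2 *ᵥ fun i' => qq j i') i
            = x (Sum.inr (i, j))
          have e1 : (dD *ᵥ fun j' => Pc j' i + cc j' i) j
              = (∑ j', dD j j' * Pc j' i) + ∑ j', dD j j' * cc j' i := by
            simp [mulVec, dotProduct, mul_add, Finset.sum_add_distrib]
          have e2 : (d2 *ᵥ fun i' => qq j i') i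
              = x (Sum.inr (i, j)) + (∑ j', dD j j' * Pc j' i) + ∑ j', dD j j' * cc j' i := by
            have hq := congrFun (hqq j) i
            rw [Matrix.mulVecLin_apply] at hq
            rw [show (fun i' => qq j i') = qq j from rfl, hq]
            try simp only [hV'def]
            all_goals ring
          rw [e1, e2]
          generalize x (Sum.inr (i, j)) = v
          generalize (∑ j', dD j j' * Pc j' i) = A
          generalize (∑ j', dD j j' * cc j' i) = Bb
          revert v A Bb
          decide
end

section
/- Let ḡ : ⊕_{i∈[t]} G[i] → C be the sum of extended chain maps g'[i] from three-term complexes G[i] to a two-term complex C = (C_1 → C_0), where each g[i] satisfies H^0(G[i]) = 0 (trivial cohomology in degree 0). Then for any cocycle (h, r) ∈ ker(δ^0_{cone(ḡ)}) with h ∈ C_0 and r ∈ ⊕_i G[i]_{-1}, we must have h ≠ 0 and h ∈ ker(δ_C), hence the 0-cosystolic distance of cone(ḡ) is at least the 0-cosystolic distance d of the cochain complex of C: d^0(cone(ḡ)) ≥ d. -/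
open Matrix

lemma blockDiagonal'_mulVec_sigma {ι : Type*} [Fintype ι] [DecidableEq ι]
    {m' n' : ι → Type*} [∀ i, Fintype (n' i)]
    (M : ∀ i, Matrix (m' i) (n' i) (ZMod 2)) (v : (Σ i, n' i) → ZMod 2)
    (i : ι) (k : m' i) :
    (Matrix.blockDiagonal' M).mulVec v ⟨i, k⟩
      = (M i).mulVec (fun j => v ⟨i, j⟩) k := by
  unfold Matrix.mulVec dotProduct
  rw [show (Finset.univ : Finset ((i : ι) × n' i)) = Finset.univ.sigma (fun _ => Finset.univ) from rfl, Finset.sum_sigma]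
  rw [Finset.sum_eq_single i]
  · simp [Matrix.blockDiagonal'_apply]
  · intro b _ hb
    apply Finset.sum_eq_zero
    intro j _
    simp [Matrix.blockDiagonal'_apply, hb.symm]
  · simp

lemma hammingNorm_comp_inr_le {α β : Type*} [Fintype α] [Fintype β]
    [DecidableEq α] [DecidableEq β]
    (x : α ⊕ β → ZMod 2) : hammingNorm (x ∘ Sum.inr) ≤ hammingNorm x := by
  unfold hammingNorm
  apply Finset.card_le_card_of_injOn Sum.inr
  · intro j hj
    simp only [Finset.mem_filter, Finset.mem_univ, true_and] at hj ⊢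
    simpa using hj
  · exact Sum.inr_injective.injOn

/-- Let `ḡ : ⊕_i G[i] → C` be the sum of extended chain maps from
three-term complexes `G[i] = (G[i]₁ → G[i]₀ → G[i]₋₁)` into a two-term complex
`C = (C₁ --∂C--> C₀)`, and suppose each `G[i]` has trivial cohomology at the
degree of `G[i]₋₁` (which sits in degree `0` of the cone):
`ker((∂_{G[i],0})ᵀ) = 0`.  If every nonzero `δ_C`-cocycle `h ∈ C₀` (i.e.
`(∂C)ᵀ h = 0`) has Hamming weight at least `d`, then for every nonzero cocycle
`x = (r, h) ∈ ker(δ⁰_{cone(ḡ)})` (with `r ∈ ⊕_i G[i]₋₁`, `h ∈ C₀`) we have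
`h ≠ 0`, `h ∈ ker(δ_C)` and `|x| ≥ d`; hence `d⁰(cone(ḡ)) ≥ d`. -/
theorem fast_surgery_cone_cosystolic_distance
    (t c1n c0n : ℕ) (d : ℕ)
    (g1n g0n gm1n : Fin t → ℕ)
    (dC : Matrix (Fin c0n) (Fin c1n) (ZMod 2))
    (dG1 : ∀ i, Matrix (Fin (g0n i)) (Fin (g1n i)) (ZMod 2))
    (dG0 : ∀ i, Matrix (Fin (gm1n i)) (Fin (g0n i)) (ZMod 2))
    (gbar0 : Matrix (Fin c0n) ((i : Fin t) × Fin (g0n i)) (ZMod 2))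
    (hchain : ∀ i, dG0 i * dG1 i = 0)
    (hH0G : ∀ i, LinearMap.ker (Matrix.mulVecLin (dG0 i)ᵀ) = ⊥)
    (hdistC : ∀ h : Fin c0n → ZMod 2,
      Matrix.mulVecLin dCᵀ h = 0 → h ≠ 0 → d ≤ hammingNorm h) :
    ∀ x : ((i : Fin t) × Fin (gm1n i)) ⊕ Fin c0n → ZMod 2,
      Matrix.mulVecLin (Matrix.fromBlocks (Matrix.blockDiagonal' dG0) 0 gbar0 dC)ᵀ x = 0 →
      x ≠ 0 →
      (x ∘ Sum.inr ≠ 0 ∧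
        Matrix.mulVecLin dCᵀ (x ∘ Sum.inr) = 0 ∧
        d ≤ hammingNorm x) := by
  intro x hx hxne
  set r : ((i : Fin t) × Fin (gm1n i)) → ZMod 2 := x ∘ Sum.inl with hr
  set h : Fin c0n → ZMod 2 := x ∘ Sum.inr with hh
  have hxelim : x = Sum.elim r h := by funext s; cases s <;> rfl
  rw [Matrix.fromBlocks_transpose, Matrix.mulVecLin_apply, hxelim,
    Matrix.fromBlocks_mulVec] at hx
  have hinl : (Matrix.blockDiagonal' dG0)ᵀ.mulVec r + gbar0ᵀ.mulVec h = 0 :=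
    funext fun p => congrFun hx (Sum.inl p)
  have hinr : (0 : Matrix _ _ (ZMod 2))ᵀ.mulVec r + dCᵀ.mulVec h = 0 :=
    funext fun p => congrFun hx (Sum.inr p)
  have hC : Matrix.mulVecLin dCᵀ h = 0 := by
    rw [Matrix.mulVecLin_apply]
    simpa using hinr
  have hne : h ≠ 0 := by
    intro h0
    have hA : (Matrix.blockDiagonal' dG0)ᵀ.mulVec r = 0 := by
      simpa [h0] using hinl
    rw [Matrix.blockDiagonal'_transpose] at hA
    have hrz : ∀ i : Fin t, (fun j => r ⟨i, j⟩) = 0 := by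
      intro i
      have hker : (fun j => r ⟨i, j⟩) ∈ LinearMap.ker (Matrix.mulVecLin (dG0 i)ᵀ) := by
        rw [LinearMap.mem_ker, Matrix.mulVecLin_apply]
        funext k
        have := congrFun hA ⟨i, k⟩
        rwa [blockDiagonal'_mulVec_sigma] at this
      rw [hH0G i] at hker
      exact hker
    apply hxne
    funext s
    cases s with
    | inl p => exact congrFun (hrz p.1) p.2
    | inr j => exact congrFun h0 j
  refine ⟨hne, hC, ?_⟩
  calc d ≤ hammingNorm h := hdistC h hC hne
    _ ≤ hammingNorm x := hammingNorm_comp_inr_le x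
end

section
/- Suppose G[i] (i ∈ [t]) are three-term complexes attached via chain maps g[i] to a two-term complex C = (C_1 → C_0) with first systolic distance d (every nonzero element of ker(∂_C) not in the span of the measured codewords has weight ≥ d, and in fact every nonzero element of ker(∂_C) has weight ≥ d). Assume: (a) each ∂_{G[i],1} has boundary Cheeger constant ≥ 1 with all-ones kernel vector v_i satisfying g[i]_1(v_i) = c_i ∈ ker(∂_C); (b) each g[i]_1 is 1-sparse (each column has at most one nonzero entry, mapping basis vectors of G[i]_1 injectively into the support of c_i). Then for any homology representative (c_j, 0,…,0) of an unmeasured class and any (v_1,…,v_t) ∈ ⊕_i G[i]_1, the deformed chain satisfies |c_j + ∑_i g[i]_1(v_i)| + ∑_i |∂_{G[i],1}(v_i)| ≥ d. Consequently d_1(cone(ḡ)) ≥ d. -/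
open Matrix


lemma hn_add_le {n : ℕ} (x y : Fin n → ZMod 2) :
    hammingNorm (x + y) ≤ hammingNorm x + hammingNorm y := by
  calc hammingNorm (x + y) = hammingDist (x+y) 0 := (hammingDist_zero_right _).symm
    _ ≤ hammingDist (x+y) y + hammingDist y 0 := hammingDist_triangle _ _ _
    _ = hammingNorm x + hammingNorm y := by
        rw [hammingDist_zero_right]
        congr 1
        simp [hammingDist, hammingNorm, Pi.add_apply]

lemma hn_sum_le {n : ℕ} {ι : Type*} (s : Finset ι) (f : ι → Fin n → ZMod 2) :
    hammingNorm (∑ i ∈ s, f i) ≤ ∑ i ∈ s, hammingNorm (f i) := by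
  induction s using Finset.cons_induction with
  | empty => simp
  | cons a s ha ih =>
    rw [Finset.sum_cons, Finset.sum_cons]
    exact le_trans (hn_add_le _ _) (by omega)

lemma hn_add_ones {n : ℕ} (x : Fin n → ZMod 2) :
    hammingNorm (x + fun _ => 1) = n - hammingNorm x := by
  have h : (Finset.univ.filter fun i => (x + fun _ => 1 : Fin n → ZMod 2) i ≠ 0) =
      Finset.univ \ (Finset.univ.filter fun i => x i ≠ 0) := by
    ext i
    simp only [Finset.mem_filter, Finset.mem_sdiff, Finset.mem_univ, true_and, Pi.add_apply]
    generalize x i = a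
    revert a; decide
  simp only [hammingNorm]
  rw [h, Finset.card_sdiff_of_subset (Finset.subset_univ _), Finset.card_univ, Fintype.card_fin]

lemma hn_sparse {m n : ℕ} (M : Matrix (Fin m) (Fin n) (ZMod 2))
    (hs : ∀ j, ({r | M r j ≠ 0} : Finset (Fin m)).card ≤ 1)
    (u : Fin n → ZMod 2) : hammingNorm (M.mulVecLin u) ≤ hammingNorm u := by
  classical
  rcases isEmpty_or_nonempty (Fin n) with he | hne
  · have hz : u = 0 := Subsingleton.elim _ _
    simp [hz]
  simp only [hammingNorm]
  have key : ∀ r : Fin m, M.mulVecLin u r ≠ 0 → ∃ j, M r j ≠ 0 ∧ u j ≠ 0 := by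
    intro r hr
    by_contra hc
    push_neg at hc
    apply hr
    simp only [mulVecLin_apply, mulVec, dotProduct]
    apply Finset.sum_eq_zero
    intro j _
    rcases eq_or_ne (M r j) 0 with h | h
    · simp [h]
    · simp [hc j h]
  choose f hf1 hf2 using key
  apply Finset.card_le_card_of_injOn
    (fun r => if h : M.mulVecLin u r ≠ 0 then f r h else Classical.arbitrary _)
  · intro r hr
    simp only [Finset.mem_coe, Finset.mem_filter, Finset.mem_univ, true_and] at hr ⊢
    rw [dif_pos hr]
    exact hf2 r hr
  · intro r hr r' hr' heq
    simp only [Finset.mem_coe, Finset.mem_filter, Finset.mem_univ, true_and] at hr hr'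
    simp only [dif_pos hr, dif_pos hr'] at heq
    have h1 : r ∈ ({rr | M rr (f r hr) ≠ 0} : Finset (Fin m)) := by
      simp [hf1 r hr]
    have h2 : r' ∈ ({rr | M rr (f r hr) ≠ 0} : Finset (Fin m)) := by
      simp only [Finset.mem_filter, Finset.mem_univ, true_and, heq]
      exact hf1 r' hr'
    exact Finset.card_le_one.mp (hs (f r hr)) r h1 r' h2

lemma pi_add_self {n : ℕ} (a : Fin n → ZMod 2) : a + a = 0 := by
  have h : ∀ b : ZMod 2, b + b = 0 := by decide
  ext i
  simp only [Pi.add_apply, Pi.zero_apply, h]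

/-- Suppose three-term complexes `G[i]` (`i ∈ [t]`) are attached via
chain maps `g[i]` to a two-term complex `C = (C₁ --∂C--> C₀)` such that every
nonzero element of `ker ∂_C` has Hamming weight `≥ d`.  Assume:
(a) each `∂_{G[i],1}` has boundary Cheeger constant `≥ 1`, with the all-ones
vector in its kernel and `g[i]₁(1) = c_i ∈ ker ∂_C`;
(b) each `g[i]₁` is 1-sparse (every column has at most one nonzero entry).
Then for any representative `c_j ∈ ker ∂_C` of an unmeasured class
(`c_j ∉ span{c_1,…,c_t}`) and any `(v_1,…,v_t) ∈ ⊕_i G[i]₁`, the deformed chain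
satisfies `|c_j + ∑_i g[i]₁(v_i)| + ∑_i |∂_{G[i],1}(v_i)| ≥ d`
(consequently, `d₁(cone(ḡ)) ≥ d`). -/
theorem deformed_chain_weight_lower_bound
    (t c1n c0n : ℕ) (d : ℕ)
    (g1n g0n : Fin t → ℕ)
    (dC : Matrix (Fin c0n) (Fin c1n) (ZMod 2))
    (dG1 : ∀ i, Matrix (Fin (g0n i)) (Fin (g1n i)) (ZMod 2))
    (gmap1 : ∀ i, Matrix (Fin c1n) (Fin (g1n i)) (ZMod 2))
    (c : Fin t → Fin c1n → ZMod 2)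
    (hcker : ∀ i, dC.mulVecLin (c i) = 0)
    (hdistC : ∀ x : Fin c1n → ZMod 2, dC.mulVecLin x = 0 → x ≠ 0 → d ≤ hammingNorm x)
    (hcheeger : ∀ i (v : Fin (g1n i) → ZMod 2),
      min (hammingNorm v) (g1n i - hammingNorm v) ≤ hammingNorm ((dG1 i).mulVecLin v))
    (hones_ker : ∀ i, (dG1 i).mulVecLin (fun _ => 1) = 0)
    (hones_c : ∀ i, (gmap1 i).mulVecLin (fun _ => 1) = c i)
    (hsparse : ∀ i (j : Fin (g1n i)),
      ({r | gmap1 i r j ≠ 0} : Finset (Fin c1n)).card ≤ 1)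
    (cj : Fin c1n → ZMod 2)
    (hcjker : dC.mulVecLin cj = 0)
    (hcjindep : cj ∉ Submodule.span (ZMod 2) (Set.range c))
    (v : ∀ i, Fin (g1n i) → ZMod 2) :
    d ≤ hammingNorm (cj + ∑ i, (gmap1 i).mulVecLin (v i))
        + ∑ i, hammingNorm ((dG1 i).mulVecLin (v i)) := by
  classical
  set ε : Fin t → ZMod 2 := fun i =>
    if hammingNorm (v i) ≤ g1n i - hammingNorm (v i) then 0 else 1 with hε
  set u : ∀ i, Fin (g1n i) → ZMod 2 := fun i => v i + ε i • (fun _ => (1 : ZMod 2)) with hu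
  -- boundary of u i equals boundary of v i
  have hbd : ∀ i, (dG1 i).mulVecLin (u i) = (dG1 i).mulVecLin (v i) := by
    intro i
    show (dG1 i).mulVecLin (v i + ε i • fun _ => (1 : ZMod 2)) = _
    simp only [map_add, _root_.map_smul, hones_ker i, smul_zero, add_zero]
  -- |u i| ≤ |∂ v i|
  have hub : ∀ i, hammingNorm (u i) ≤ hammingNorm ((dG1 i).mulVecLin (v i)) := by
    intro i
    refine le_trans ?_ (hcheeger i (v i))
    by_cases h : hammingNorm (v i) ≤ g1n i - hammingNorm (v i)
    · have hui : u i = v i := by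
        show v i + ε i • (fun _ => (1 : ZMod 2)) = v i
        simp [hε, h]
      rw [hui, min_eq_left h]
    · have hui : u i = v i + fun _ => (1 : ZMod 2) := by
        show v i + ε i • (fun _ => (1 : ZMod 2)) = _
        simp [hε, h]
      rw [hui, hn_add_ones]
      omega
  -- relation between g1 of v and u
  have hg : ∀ i, (gmap1 i).mulVecLin (v i)
      = (gmap1 i).mulVecLin (u i) + ε i • c i := by
    intro i
    have : (gmap1 i).mulVecLin (u i)
        = (gmap1 i).mulVecLin (v i) + ε i • c i := by
      show (gmap1 i).mulVecLin (v i + ε i • fun _ => (1 : ZMod 2)) = _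
      simp only [map_add, _root_.map_smul, hones_c i]
    rw [this, add_assoc, ← smul_add, pi_add_self, smul_zero, add_zero]
  set z : Fin c1n → ZMod 2 := cj + ∑ i, ε i • c i with hz
  have hzker : dC.mulVecLin z = 0 := by
    simp [hz, map_add, map_sum, _root_.map_smul, hcjker, hcker]
  have hzne : z ≠ 0 := by
    intro h0
    apply hcjindep
    have : cj = ∑ i, ε i • c i := by
      have := congrArg (· + ∑ i, ε i • c i) h0
      simpa [hz, add_assoc, pi_add_self] using this
    rw [this]
    exact Submodule.sum_mem _ fun i _ =>
      Submodule.smul_mem _ _ (Submodule.subset_span (Set.mem_range_self i))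
  have hd : d ≤ hammingNorm z := hdistC z hzker hzne
  -- z = w + ∑ g1(u i)
  have hzeq : z = (cj + ∑ i, (gmap1 i).mulVecLin (v i))
      + ∑ i, (gmap1 i).mulVecLin (u i) := by
    have h1 : ∑ i, (gmap1 i).mulVecLin (v i)
        = ∑ i, (gmap1 i).mulVecLin (u i) + ∑ i, ε i • c i := by
      rw [← Finset.sum_add_distrib]
      exact Finset.sum_congr rfl fun i _ => hg i
    rw [hz, h1]
    have hGG : (∑ i, (gmap1 i).mulVecLin (u i)) + ∑ i, (gmap1 i).mulVecLin (u i)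
        = 0 := pi_add_self _
    symm
    calc cj + (∑ i, (gmap1 i).mulVecLin (u i) + ∑ i, ε i • c i)
          + ∑ i, (gmap1 i).mulVecLin (u i)
        = cj + ∑ i, ε i • c i
          + ((∑ i, (gmap1 i).mulVecLin (u i)) + ∑ i, (gmap1 i).mulVecLin (u i)) := by
          abel
      _ = cj + ∑ i, ε i • c i := by rw [hGG, add_zero]
  calc d ≤ hammingNorm z := hd
    _ ≤ hammingNorm (cj + ∑ i, (gmap1 i).mulVecLin (v i))
        + hammingNorm (∑ i, (gmap1 i).mulVecLin (u i)) := by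
          rw [hzeq]; exact hn_add_le _ _
    _ ≤ hammingNorm (cj + ∑ i, (gmap1 i).mulVecLin (v i))
        + ∑ i, hammingNorm ((dG1 i).mulVecLin (v i)) := by
          gcongr
          refine le_trans (hn_sum_le _ _) (Finset.sum_le_sum fun i _ => ?_)
          exact le_trans (hn_sparse _ (hsparse i) (u i)) (hub i)
end
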